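/- For the Frank–Wolfe iterates, define E(t_j) = a_{t_j} F(x(t_j)) − √a_{t_j} F(x*) where √a_{t_j} = e^{t_j/(1+t_j)} and a_{t_j} = e^{2t_j/(1+t_j)}. Then for every j ∈ {0,…,T−1}, E(t_{j+1}) − E(t_j) ≥ √a_{t_j} (√(a_{t_{j+1}}/a_{t_j}) − 1)² (F(x*) − √a_{t_j} F(x(t_j))) − (nL/2)(√a_{t_{j+1}} − √a_{t_j})². -/

import Mathlib

/-- The harmonic number `H j = ∑_{k=1}^j 1/k` (with `H 0 = 0`). -/
noncomputable def harmonicNum (j : ℕ) : ℝ := ∑ k ∈ Finset.range j, (1 : ℝ) / (k + 1)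

/-- `H_{2,j} = ∑_{k=1}^j 1/k²`. -/
noncomputable def harmonicNum2 (j : ℕ) : ℝ := ∑ k ∈ Finset.range j, (1 : ℝ) / ((k : ℝ) + 1) ^ 2

/-- The time values `t_j = 1/(1 - ln(1 + H_j/H_T)) - 1` of the Frank–Wolfe algorithm. -/
noncomputable def fwTime (T j : ℕ) : ℝ :=
  1 / (1 - Real.log (1 + harmonicNum j / harmonicNum T)) - 1

/-- The Frank–Wolfe step ratio `e^{-1/(1+t_j) + 1/(1+t_{j+1})}`. -/
noncomputable def fwRatio (T j : ℕ) : ℝ :=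
  Real.exp (-(1 / (1 + fwTime T j)) + 1 / (1 + fwTime T (j + 1)))

/-- `√a_{t_j} = e^{t_j/(1+t_j)}`. -/
noncomputable def fwSqa (T j : ℕ) : ℝ := Real.exp (fwTime T j / (1 + fwTime T j))

/-- `F : [0,1]^n → ℝ` is DR-submodular: for all `x ≤ y` in `[0,1]^n`, coordinates `i` and
`a > 0` with `x + a·e_i, y + a·e_i ∈ [0,1]^n`, one has
`F(x + a·e_i) - F(x) ≥ F(y + a·e_i) - F(y)`. -/
def DRSubmodular {n : ℕ} (F : (Fin n → ℝ) → ℝ) : Prop :=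
  ∀ x y : Fin n → ℝ, x ∈ Set.Icc (0 : Fin n → ℝ) 1 → y ∈ Set.Icc (0 : Fin n → ℝ) 1 →
    x ≤ y → ∀ i : Fin n, ∀ a : ℝ, 0 < a →
      x + a • (Pi.single i 1 : Fin n → ℝ) ∈ Set.Icc (0 : Fin n → ℝ) 1 →
      y + a • (Pi.single i 1 : Fin n → ℝ) ∈ Set.Icc (0 : Fin n → ℝ) 1 →
      F (y + a • (Pi.single i 1 : Fin n → ℝ)) - F y ≤
        F (x + a • (Pi.single i 1 : Fin n → ℝ)) - F x

/-- The continuous linear map `y ↦ ⟨g, y⟩ = ∑ i, g i * y i` on `ℝⁿ`. -/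
noncomputable def gradCLM {n : ℕ} (g : Fin n → ℝ) : (Fin n → ℝ) →L[ℝ] ℝ :=
  ∑ i, g i • (ContinuousLinearMap.proj i : (Fin n → ℝ) →L[ℝ] ℝ)

/-- `gradF` is the gradient of `F` on the box `[0,1]^n`: at each point of the box, `F` is
differentiable within the box with derivative `y ↦ ⟨gradF z, y⟩`. -/
def HasGradientOnBox {n : ℕ} (F : (Fin n → ℝ) → ℝ) (gradF : (Fin n → ℝ) → Fin n → ℝ) : Prop :=
  ∀ z ∈ Set.Icc (0 : Fin n → ℝ) 1, HasFDerivWithinAt F (gradCLM (gradF z)) (Set.Icc 0 1) z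

section Aux

variable {n : ℕ} {F : (Fin n → ℝ) → ℝ} {gradF : (Fin n → ℝ) → Fin n → ℝ}

/-- Multi-coordinate DR property. -/
lemma dr_multi (hDR : DRSubmodular F)
    (x y w : Fin n → ℝ) (hxy : x ≤ y) (hw : 0 ≤ w)
    (hx : x ∈ Set.Icc (0 : Fin n → ℝ) 1)
    (hyw : y + w ∈ Set.Icc (0 : Fin n → ℝ) 1) :
    F (y + w) - F y ≤ F (x + w) - F x := by
  have hx0 : (0 : Fin n → ℝ) ≤ x := hx.1
  have hy0 : (0 : Fin n → ℝ) ≤ y := le_trans hx0 hxy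
  have hyw1 : y + w ≤ 1 := hyw.2
  have hxw1 : x + w ≤ 1 := le_trans (add_le_add_left hxy w) hyw1
  have box_of : ∀ z u : Fin n → ℝ, 0 ≤ z → 0 ≤ u → u ≤ w → z + w ≤ 1 →
      z + u ∈ Set.Icc (0 : Fin n → ℝ) 1 := by
    intro z u hz hu huw h1
    exact ⟨le_add_of_le_of_nonneg hz hu, le_trans (add_le_add_right huw z) h1⟩
  have key : ∀ s : Finset (Fin n),
      F (y + fun i => if i ∈ s then w i else 0) - F y ≤
      F (x + fun i => if i ∈ s then w i else 0) - F x := by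
    intro s
    induction s using Finset.induction_on with
    | empty =>
      have h0 : (fun _ : Fin n => (0:ℝ)) = 0 := rfl
      simp [h0]
    | @insert i s hins ih =>
      by_cases hwi : w i = 0
      · have : (fun k => if k ∈ insert i s then w k else 0) =
            (fun k => if k ∈ s then w k else 0) := by
          funext k
          by_cases hk : k = i
          · subst hk; simp [hwi]
          · simp [Finset.mem_insert, hk]
        rw [this]; exact ih
      · have hwi' : 0 < w i := lt_of_le_of_ne (hw i) (Ne.symm hwi)
        have hsplit : (fun k => if k ∈ insert i s then w k else 0) =
            (fun k => if k ∈ s then w k else 0) + w i • (Pi.single i 1 : Fin n → ℝ) := by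
          funext k
          by_cases hk : k = i
          · subst hk; simp [hins, Pi.single_apply]
          · simp [Finset.mem_insert, hk, Pi.single_apply]
        set ws : Fin n → ℝ := fun k => if k ∈ s then w k else 0 with hwsdef
        set wsi : Fin n → ℝ := fun k => if k ∈ insert i s then w k else 0 with hwsidef
        have hws0 : (0 : Fin n → ℝ) ≤ ws := by
          intro k; simp only [hwsdef]; split_ifs <;> first | exact hw k | exact le_rfl
        have hwsw : ws ≤ w := by
          intro k; simp only [hwsdef]; split_ifs <;> first | exact hw k | exact le_rfl
        have hwsi0 : (0 : Fin n → ℝ) ≤ wsi := by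
          intro k; simp only [hwsidef]; split_ifs <;> first | exact hw k | exact le_rfl
        have hwsiw : wsi ≤ w := by
          intro k; simp only [hwsidef]; split_ifs <;> first | exact hw k | exact le_rfl
        have h1 := hDR (x + ws) (y + ws) (box_of x ws hx0 hws0 hwsw hxw1)
          (box_of y ws hy0 hws0 hwsw hyw1)
          (add_le_add_left hxy ws) i (w i) hwi' ?_ ?_
        · rw [hsplit]
          calc F (y + (ws + w i • (Pi.single i 1 : Fin n → ℝ))) - F y
              = (F (y + ws + w i • (Pi.single i 1 : Fin n → ℝ)) - F (y + ws)) +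
                (F (y + ws) - F y) := by rw [add_assoc]; ring
            _ ≤ (F (x + ws + w i • (Pi.single i 1 : Fin n → ℝ)) - F (x + ws)) +
                (F (x + ws) - F x) := add_le_add h1 ih
            _ = F (x + (ws + w i • (Pi.single i 1 : Fin n → ℝ))) - F x := by
                rw [add_assoc]; ring
        · rw [add_assoc, ← hsplit]; exact box_of x wsi hx0 hwsi0 hwsiw hxw1
        · rw [add_assoc, ← hsplit]; exact box_of y wsi hy0 hwsi0 hwsiw hyw1
  have := key Finset.univ
  simpa using this

lemma gradCLM_apply (g u : Fin n → ℝ) : gradCLM g u = ∑ i, g i * u i := by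
  simp [gradCLM]

lemma seg_mem_box {z u : Fin n → ℝ} (hu : 0 ≤ u) {t : ℝ}
    (hz : z ∈ Set.Icc (0 : Fin n → ℝ) 1) (hzt : z + t • u ∈ Set.Icc (0 : Fin n → ℝ) 1) :
    ∀ s ∈ Set.Icc (0:ℝ) t, z + s • u ∈ Set.Icc (0 : Fin n → ℝ) 1 := by
  intro s hs
  constructor
  · intro k
    have h1 := hz.1 k
    have h2 := hu k
    simp only [Pi.add_apply, Pi.smul_apply, smul_eq_mul, Pi.zero_apply] at h1 h2 ⊢
    nlinarith [hs.1]
  · intro k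
    have h1 := hzt.2 k
    have h2 := hu k
    simp only [Pi.add_apply, Pi.smul_apply, smul_eq_mul, Pi.zero_apply, Pi.one_apply] at h1 h2 ⊢
    nlinarith [hs.2]

lemma line_hasDeriv (hgrad : HasGradientOnBox F gradF) (z u : Fin n → ℝ)
    {t c : ℝ} (hc : c ∈ Set.Icc (0:ℝ) t)
    (hmem : ∀ s ∈ Set.Icc (0:ℝ) t, z + s • u ∈ Set.Icc (0 : Fin n → ℝ) 1) :
    HasDerivWithinAt (fun s : ℝ => F (z + s • u)) (∑ i, gradF (z + c • u) i * u i)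
      (Set.Icc 0 t) c := by
  have hline : HasDerivAt (fun s : ℝ => z + s • u) u c := by
    simpa using ((hasDerivAt_id c).smul_const u).const_add z
  have h := (hgrad _ (hmem c hc)).comp_hasDerivWithinAt (x := c)
    hline.hasDerivWithinAt (fun s hs => hmem s hs)
  simpa [Function.comp_def, gradCLM_apply] using h

lemma chord_left (hDR : DRSubmodular F) (hgrad : HasGradientOnBox F gradF)
    {z u : Fin n → ℝ} (hu : 0 ≤ u) {t : ℝ} (ht : 0 < t)
    (hz : z ∈ Set.Icc (0 : Fin n → ℝ) 1) (hzt : z + t • u ∈ Set.Icc (0 : Fin n → ℝ) 1) :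
    F (z + t • u) - F z ≤ t * ∑ i, gradF z i * u i := by
  have hmem := seg_mem_box hu hz hzt
  have step1 : ∀ N : ℕ, 1 ≤ N →
      F (z + t • u) - F z ≤ (N:ℝ) * (F (z + (t/N) • u) - F z) := by
    intro N hN
    have hNR : (0:ℝ) < N := by exact_mod_cast hN
    set δ := t / (N:ℝ) with hδdef
    have hδpos : 0 < δ := div_pos ht hNR
    have hmem' : ∀ k : ℕ, k ≤ N → z + ((k:ℝ) * δ) • u ∈ Set.Icc (0 : Fin n → ℝ) 1 := by
      intro k hk
      refine hmem _ ⟨by positivity, ?_⟩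
      have : (k:ℝ) ≤ N := by exact_mod_cast hk
      calc (k:ℝ) * δ ≤ (N:ℝ) * δ := by nlinarith
        _ = t := by rw [hδdef]; field_simp
    have incr : ∀ k : ℕ, k < N →
        F (z + (((k:ℝ)+1) * δ) • u) - F (z + ((k:ℝ) * δ) • u) ≤ F (z + δ • u) - F z := by
      intro k hk
      have h := dr_multi hDR z (z + ((k:ℝ) * δ) • u) (δ • u)
        (le_add_of_nonneg_right (by positivity)) (by positivity) hz ?_
      · have e1 : z + ((k:ℝ) * δ) • u + δ • u = z + (((k:ℝ)+1) * δ) • u := by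
          rw [add_assoc, ← add_smul]; ring_nf
        have e2 : z + δ • u = z + δ • u := rfl
        rw [e1] at h
        simpa using h
      · have e1 : z + ((k:ℝ) * δ) • u + δ • u = z + (((k:ℝ)+1) * δ) • u := by
          rw [add_assoc, ← add_smul]; ring_nf
        rw [e1]
        have : (((k:ℝ))+1) * δ = ((k+1:ℕ):ℝ) * δ := by push_cast; ring
        rw [this]
        exact hmem' (k+1) hk
    set f : ℕ → ℝ := fun k => F (z + ((k:ℝ) * δ) • u) with hfdef
    have tele : F (z + t • u) - F z = ∑ k ∈ Finset.range N, (f (k+1) - f k) := by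
      rw [Finset.sum_range_sub f]
      have hN0 : f N = F (z + t • u) := by
        simp only [hfdef]
        congr 2
        rw [hδdef]; field_simp
      have h00 : f 0 = F z := by simp [hfdef]
      rw [hN0, h00]
    rw [tele]
    have hbound : ∑ k ∈ Finset.range N, (f (k+1) - f k) ≤
        ∑ k ∈ Finset.range N, (F (z + δ • u) - F z) := by
      refine Finset.sum_le_sum fun k hk => ?_
      have := incr k (Finset.mem_range.1 hk)
      simp only [hfdef]
      convert this using 4
      · rfl
      · simp
    refine hbound.trans ?_
    rw [Finset.sum_const, Finset.card_range, nsmul_eq_mul]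
  -- Step 2 : limit
  have hD : HasDerivWithinAt (fun s : ℝ => F (z + s • u)) (∑ i, gradF z i * u i)
      (Set.Icc 0 t) 0 := by
    have := line_hasDeriv hgrad z u (t := t) (c := 0) ⟨le_refl 0, ht.le⟩ hmem
    simpa using this
  have hslope := hasDerivWithinAt_iff_tendsto_slope.1 hD
  set g : ℝ → ℝ := fun s => F (z + s • u) with hgdef
  have hseq : Filter.Tendsto (fun N : ℕ => t / (N:ℝ)) Filter.atTop
      (nhdsWithin 0 (Set.Icc 0 t \ {0})) := by
    refine tendsto_nhdsWithin_of_tendsto_nhds_of_eventually_within _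
      (tendsto_const_div_atTop_nhds_zero_nat t) ?_
    filter_upwards [Filter.eventually_ge_atTop 1] with N hN
    have hNR : (0:ℝ) < N := by exact_mod_cast hN
    have h1 : 0 < t / (N:ℝ) := div_pos ht hNR
    have h2 : t / (N:ℝ) ≤ t := by
      rw [div_le_iff₀ hNR]
      nlinarith [ht.le, (by exact_mod_cast hN : (1:ℝ) ≤ (N:ℝ))]
    exact ⟨⟨h1.le, h2⟩, ne_of_gt h1⟩
  have hcomp : Filter.Tendsto (fun N : ℕ => slope g 0 (t / (N:ℝ))) Filter.atTop
      (nhds (∑ i, gradF z i * u i)) := hslope.comp hseq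
  have hphi : Filter.Tendsto (fun N : ℕ => (N:ℝ) * (F (z + (t/(N:ℝ)) • u) - F z))
      Filter.atTop (nhds (t * ∑ i, gradF z i * u i)) := by
    have := hcomp.const_mul t
    refine this.congr' ?_
    filter_upwards [Filter.eventually_ge_atTop 1] with N hN
    have hNR : (0:ℝ) < N := by exact_mod_cast hN
    have hδpos : 0 < t / (N:ℝ) := div_pos ht hNR
    have hz0 : z + (0:ℝ) • u = z := by simp
    simp only [slope_def_field, hgdef, hz0]
    field_simp
    linear_combination (F (z + (t / (N:ℝ)) • u) - F z) * mul_inv_cancel₀ ht.ne'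
  refine ge_of_tendsto hphi ?_
  filter_upwards [Filter.eventually_ge_atTop 1] with N hN
  exact step1 N hN

lemma chord_right (hDR : DRSubmodular F) (hgrad : HasGradientOnBox F gradF)
    {z u : Fin n → ℝ} (hu : 0 ≤ u) {t : ℝ} (ht : 0 < t)
    (hz : z ∈ Set.Icc (0 : Fin n → ℝ) 1) (hzt : z + t • u ∈ Set.Icc (0 : Fin n → ℝ) 1) :
    t * ∑ i, gradF (z + t • u) i * u i ≤ F (z + t • u) - F z := by
  have hmem := seg_mem_box hu hz hzt
  have step1 : ∀ N : ℕ, 1 ≤ N →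
      (N:ℝ) * (F (z + t • u) - F (z + (t - t/N) • u)) ≤ F (z + t • u) - F z := by
    intro N hN
    have hNR : (0:ℝ) < N := by exact_mod_cast hN
    set δ := t / (N:ℝ) with hδdef
    have hδpos : 0 < δ := div_pos ht hNR
    have hδt : δ ≤ t := by
      rw [hδdef, div_le_iff₀ hNR]
      nlinarith [ht.le, (by exact_mod_cast hN : (1:ℝ) ≤ (N:ℝ))]
    have hmem' : ∀ k : ℕ, k ≤ N → z + ((k:ℝ) * δ) • u ∈ Set.Icc (0 : Fin n → ℝ) 1 := by
      intro k hk
      refine hmem _ ⟨by positivity, ?_⟩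
      have : (k:ℝ) ≤ N := by exact_mod_cast hk
      calc (k:ℝ) * δ ≤ (N:ℝ) * δ := by nlinarith
        _ = t := by rw [hδdef]; field_simp
    have incr : ∀ k : ℕ, k < N →
        F (z + t • u) - F (z + (t - δ) • u) ≤
          F (z + (((k:ℝ)+1) * δ) • u) - F (z + ((k:ℝ) * δ) • u) := by
      intro k hk
      have hk1 : ((k:ℝ)+1) ≤ N := by exact_mod_cast hk
      have hNδ : (N:ℝ) * δ = t := by rw [hδdef]; field_simp
      have hxy : ((k:ℝ) * δ) ≤ t - δ := by nlinarith
      have h := dr_multi hDR (z + ((k:ℝ) * δ) • u) (z + (t - δ) • u) (δ • u) ?_ (by positivity)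
        (hmem' k hk.le) ?_
      · have e1 : z + ((k:ℝ) * δ) • u + δ • u = z + (((k:ℝ)+1) * δ) • u := by
          rw [add_assoc, ← add_smul]; ring_nf
        have e2 : z + (t - δ) • u + δ • u = z + t • u := by
          rw [add_assoc, ← add_smul]; ring_nf
        rw [e1, e2] at h
        linarith
      · intro i
        simp only [Pi.add_apply, Pi.smul_apply, smul_eq_mul]
        nlinarith [mul_le_mul_of_nonneg_right hxy (hu i)]
      · have e2 : z + (t - δ) • u + δ • u = z + t • u := by
          rw [add_assoc, ← add_smul]; ring_nf
        rw [e2]; exact hzt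
    set f : ℕ → ℝ := fun k => F (z + ((k:ℝ) * δ) • u) with hfdef
    have tele : F (z + t • u) - F z = ∑ k ∈ Finset.range N, (f (k+1) - f k) := by
      rw [Finset.sum_range_sub f]
      have hN0 : f N = F (z + t • u) := by
        simp only [hfdef]
        congr 2
        rw [hδdef]; field_simp
      have h00 : f 0 = F z := by simp [hfdef]
      rw [hN0, h00]
    rw [tele]
    have hbound : ∑ k ∈ Finset.range N, (F (z + t • u) - F (z + (t - δ) • u)) ≤
        ∑ k ∈ Finset.range N, (f (k+1) - f k) := by
      refine Finset.sum_le_sum fun k hk => ?_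
      have h := incr k (Finset.mem_range.1 hk)
      simp only [hfdef]
      convert h using 4
      · rfl
      · simp
    refine le_trans ?_ hbound
    rw [Finset.sum_const, Finset.card_range, nsmul_eq_mul]
  -- Step 2 : limit
  have hD : HasDerivWithinAt (fun s : ℝ => F (z + s • u)) (∑ i, gradF (z + t • u) i * u i)
      (Set.Icc 0 t) t :=
    line_hasDeriv hgrad z u (t := t) (c := t) ⟨ht.le, le_refl t⟩ hmem
  have hslope := hasDerivWithinAt_iff_tendsto_slope.1 hD
  set g : ℝ → ℝ := fun s => F (z + s • u) with hgdef
  have hseq : Filter.Tendsto (fun N : ℕ => t - t / (N:ℝ)) Filter.atTop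
      (nhdsWithin t (Set.Icc 0 t \ {t})) := by
    refine tendsto_nhdsWithin_of_tendsto_nhds_of_eventually_within _ ?_ ?_
    · have := (tendsto_const_div_atTop_nhds_zero_nat t).const_sub t
      simpa using this
    · filter_upwards [Filter.eventually_ge_atTop 1] with N hN
      have hNR : (0:ℝ) < N := by exact_mod_cast hN
      have h1 : 0 < t / (N:ℝ) := div_pos ht hNR
      have h2 : t / (N:ℝ) ≤ t := by
        rw [div_le_iff₀ hNR]
        nlinarith [ht.le, (by exact_mod_cast hN : (1:ℝ) ≤ (N:ℝ))]
      refine ⟨⟨by linarith, by linarith⟩, ?_⟩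
      intro hc
      rw [Set.mem_singleton_iff] at hc
      linarith
  have hcomp : Filter.Tendsto (fun N : ℕ => slope g t (t - t / (N:ℝ))) Filter.atTop
      (nhds (∑ i, gradF (z + t • u) i * u i)) := hslope.comp hseq
  have hphi : Filter.Tendsto (fun N : ℕ => (N:ℝ) * (F (z + t • u) - F (z + (t - t/(N:ℝ)) • u)))
      Filter.atTop (nhds (t * ∑ i, gradF (z + t • u) i * u i)) := by
    have h2 := hcomp.const_mul t
    refine h2.congr' ?_
    filter_upwards [Filter.eventually_ge_atTop 1] with N hN
    have hNR : (0:ℝ) < N := by exact_mod_cast hN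
    have hδpos : 0 < t / (N:ℝ) := div_pos ht hNR
    rw [slope_def_field]
    set A := g (t - t / (N:ℝ)) with hA
    set B := g t with hB
    rw [show t - t / (N:ℝ) - t = -(t/(N:ℝ)) from by ring]
    have hgt : B = F (z + t • u) := rfl
    have hgp : A = F (z + (t - t/(N:ℝ)) • u) := rfl
    rw [← hgt, ← hgp]
    have ht' : t ≠ 0 := ne_of_gt ht
    have hN' : (N:ℝ) ≠ 0 := ne_of_gt hNR
    field_simp
    ring
  refine le_of_tendsto hphi ?_
  filter_upwards [Filter.eventually_ge_atTop 1] with N hN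
  exact step1 N hN

lemma hassani (hDR : DRSubmodular F) (hgrad : HasGradientOnBox F gradF)
    {x y : Fin n → ℝ} (hx : x ∈ Set.Icc (0 : Fin n → ℝ) 1)
    (hy : y ∈ Set.Icc (0 : Fin n → ℝ) 1) :
    F (x ⊔ y) + F (x ⊓ y) - 2 * F x ≤ ∑ i, gradF x i * (y i - x i) := by
  set up : Fin n → ℝ := fun i => max (y i - x i) 0 with hupdef
  set um : Fin n → ℝ := fun i => max (x i - y i) 0 with humdef
  have hup0 : (0 : Fin n → ℝ) ≤ up := fun i => le_max_right _ _
  have hum0 : (0 : Fin n → ℝ) ≤ um := fun i => le_max_right _ _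
  have heup : x + (1:ℝ) • up = x ⊔ y := by
    funext i
    simp only [Pi.add_apply, Pi.smul_apply, smul_eq_mul, one_mul, Pi.sup_apply, hupdef]
    rcases le_total (x i) (y i) with h | h
    · rw [max_eq_left (by linarith), sup_eq_right.2 h]; ring
    · rw [max_eq_right (by linarith), sup_eq_left.2 h]; ring
  have heum : (x ⊓ y) + (1:ℝ) • um = x := by
    funext i
    simp only [Pi.add_apply, Pi.smul_apply, smul_eq_mul, one_mul, Pi.inf_apply, humdef]
    rcases le_total (x i) (y i) with h | h
    · rw [max_eq_right (by linarith), inf_eq_left.2 h]; ring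
    · rw [max_eq_left (by linarith), inf_eq_right.2 h]; ring
  have hsup_box : x ⊔ y ∈ Set.Icc (0 : Fin n → ℝ) 1 := by
    constructor
    · intro i; exact le_trans (hx.1 i) (le_sup_left (b := y i))
    · intro i; exact sup_le (hx.2 i) (hy.2 i)
  have hinf_box : x ⊓ y ∈ Set.Icc (0 : Fin n → ℝ) 1 := by
    constructor
    · intro i; exact le_inf (hx.1 i) (hy.1 i)
    · intro i; exact le_trans (inf_le_left (b := y i)) (hx.2 i)
  have h1 : F (x + (1:ℝ) • up) - F x ≤ 1 * ∑ i, gradF x i * up i := by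
    refine chord_left hDR hgrad hup0 one_pos hx ?_
    rw [heup]; exact hsup_box
  have h2 : 1 * ∑ i, gradF ((x ⊓ y) + (1:ℝ) • um) i * um i ≤ F ((x ⊓ y) + (1:ℝ) • um) - F (x ⊓ y) := by
    refine chord_right hDR hgrad hum0 one_pos hinf_box ?_
    rw [heum]; exact hx
  rw [heup] at h1
  rw [heum] at h2
  have hsum : ∑ i, gradF x i * (y i - x i) =
      (∑ i, gradF x i * up i) - ∑ i, gradF x i * um i := by
    rw [← Finset.sum_sub_distrib]
    refine Finset.sum_congr rfl fun i _ => ?_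
    have : up i - um i = y i - x i := by
      simp only [hupdef, humdef]
      rcases le_total (x i) (y i) with h | h
      · rw [max_eq_left (by linarith), max_eq_right (by linarith)]; ring
      · rw [max_eq_right (by linarith), max_eq_left (by linarith)]; ring
    rw [← this]; ring
  rw [hsum]
  linarith

lemma sup_lower_bound (hDR : DRSubmodular F) (hgrad : HasGradientOnBox F gradF)
    (hFnonneg : ∀ z ∈ Set.Icc (0 : Fin n → ℝ) 1, 0 ≤ F z)
    {x y : Fin n → ℝ} (hx : x ∈ Set.Icc (0 : Fin n → ℝ) 1)
    (hy : y ∈ Set.Icc (0 : Fin n → ℝ) 1) {δ : ℝ} (hδ0 : 0 ≤ δ) (hδ1 : δ < 1)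
    (hxδ : ∀ i, x i ≤ δ) :
    (1 - δ) * F y ≤ F (x ⊔ y) := by
  rcases eq_or_lt_of_le hδ0 with hδz | hδpos
  · have hx0 : x = 0 := by
      funext i
      have hxi : x i ≤ 0 := hδz ▸ hxδ i
      exact le_antisymm hxi (hx.1 i)
    rw [hx0, sup_eq_right.2 hy.1, ← hδz]
    simp
  set u : Fin n → ℝ := fun i => max (x i - y i) 0 with hudef
  have hu0 : (0 : Fin n → ℝ) ≤ u := fun i => le_max_right _ _
  have heyu : y + (1:ℝ) • u = x ⊔ y := by
    funext i
    simp only [Pi.add_apply, Pi.smul_apply, smul_eq_mul, one_mul, Pi.sup_apply, hudef]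
    rcases le_total (x i) (y i) with h | h
    · rw [max_eq_right (by linarith), sup_eq_right.2 h]; ring
    · rw [max_eq_left (by linarith), sup_eq_left.2 h]; ring
  have htop : y + (1/δ) • u ∈ Set.Icc (0 : Fin n → ℝ) 1 := by
    constructor
    · intro i
      have := hy.1 i
      have h2 := hu0 i
      simp only [Pi.add_apply, Pi.smul_apply, smul_eq_mul, Pi.zero_apply] at *
      positivity
    · intro i
      simp only [Pi.add_apply, Pi.smul_apply, smul_eq_mul, Pi.one_apply, hudef]
      rcases le_total (x i) (y i) with h | h
      · rw [max_eq_right (by linarith)]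
        simpa using hy.2 i
      · rw [max_eq_left (by linarith)]
        have h1 : (0:ℝ) ≤ y i := hy.1 i
        have h2 : y i ≤ (1:ℝ) := hy.2 i
        have h3 := hxδ i
        rw [div_mul_eq_mul_div, one_mul, ← le_sub_iff_add_le', div_le_iff₀ hδpos]
        nlinarith [mul_nonneg h1 (by linarith : (0:ℝ) ≤ 1 - δ)]
  have hmem := seg_mem_box hu0 hy htop
  have hone : (1:ℝ) ∈ Set.Icc (0:ℝ) (1/δ) := by
    constructor
    · norm_num
    · rw [le_div_iff₀ hδpos]; linarith
  have hmid : y + (1:ℝ) • u ∈ Set.Icc (0 : Fin n → ℝ) 1 := hmem 1 hone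
  have h1 : 1 * ∑ i, gradF (y + (1:ℝ) • u) i * u i ≤ F (y + (1:ℝ) • u) - F y :=
    chord_right hDR hgrad hu0 one_pos hy hmid
  have htpos : 0 < 1/δ - 1 := by
    rw [sub_pos, lt_div_iff₀ hδpos]; linarith
  have h2 : F ((y + (1:ℝ) • u) + (1/δ - 1) • u) - F (y + (1:ℝ) • u) ≤
      (1/δ - 1) * ∑ i, gradF (y + (1:ℝ) • u) i * u i := by
    refine chord_left hDR hgrad hu0 htpos hmid ?_
    have : (y + (1:ℝ) • u) + (1/δ - 1) • u = y + (1/δ) • u := by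
      rw [add_assoc, ← add_smul]; ring_nf
    rw [this]; exact htop
  have hrw : (y + (1:ℝ) • u) + (1/δ - 1) • u = y + (1/δ) • u := by
    rw [add_assoc, ← add_smul]; ring_nf
  rw [hrw] at h2
  have h3 : 0 ≤ F (y + (1/δ) • u) := hFnonneg _ htop
  rw [heyu] at h1 h2
  set D := ∑ i, gradF (x ⊔ y) i * u i
  -- (1/δ - 1) * (F (x⊔y) - F y) ≥ (1/δ-1) * D ≥ -F (x⊔y)
  have h4 : (1/δ - 1) * (F (x ⊔ y) - F y) ≥ -(F (x ⊔ y)) := by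
    nlinarith [h1, h2, h3, htpos]
  have hδ' : δ ≠ 0 := ne_of_gt hδpos
  have h5 : (1/δ - 1) * F y ≤ (1/δ) * F (x ⊔ y) := by nlinarith
  calc (1 - δ) * F y = δ * ((1/δ - 1) * F y) := by field_simp
    _ ≤ δ * ((1/δ) * F (x ⊔ y)) := mul_le_mul_of_nonneg_left h5 hδ0
    _ = F (x ⊔ y) := by field_simp

end Aux

section Arith

lemma harmonicNum_nonneg (j : ℕ) : 0 ≤ harmonicNum j := by
  unfold harmonicNum
  positivity

lemma harmonicNum_mono : Monotone harmonicNum := by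
  intro a b hab
  unfold harmonicNum
  refine Finset.sum_le_sum_of_subset_of_nonneg (Finset.range_subset_range.2 hab) ?_
  intro k _ _
  positivity

lemma harmonicNum_pos {T : ℕ} (hT : 1 ≤ T) : 0 < harmonicNum T := by
  have h1 : harmonicNum 1 ≤ harmonicNum T := harmonicNum_mono hT
  have : harmonicNum 1 = 1 := by simp [harmonicNum]
  linarith

lemma fw_frac_mem {T j : ℕ} (hT : 1 ≤ T) (hj : j ≤ T) :
    0 ≤ harmonicNum j / harmonicNum T ∧ harmonicNum j / harmonicNum T ≤ 1 := by
  have hTpos := harmonicNum_pos hT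
  constructor
  · exact div_nonneg (harmonicNum_nonneg j) hTpos.le
  · rw [div_le_one hTpos]
    exact harmonicNum_mono hj

lemma fw_log_lt_one {r : ℝ} (h0 : 0 ≤ r) (h1 : r ≤ 1) : Real.log (1 + r) < 1 := by
  have h2 : (1:ℝ) + r ≤ 2 := by linarith
  have h3 : Real.log (1 + r) ≤ Real.log 2 :=
    Real.log_le_log (by linarith) h2
  have := Real.log_two_lt_d9
  linarith

lemma fwTime_inv {T j : ℕ} (hT : 1 ≤ T) (hj : j ≤ T) :
    1 / (1 + fwTime T j) = 1 - Real.log (1 + harmonicNum j / harmonicNum T) ∧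
      fwTime T j / (1 + fwTime T j) = Real.log (1 + harmonicNum j / harmonicNum T) := by
  obtain ⟨hr0, hr1⟩ := fw_frac_mem hT hj
  set r := harmonicNum j / harmonicNum T
  have hlog0 : 0 ≤ Real.log (1 + r) := Real.log_nonneg (by linarith)
  have hlog1 : Real.log (1 + r) < 1 := fw_log_lt_one hr0 hr1
  set d := 1 - Real.log (1 + r) with hd
  have hdpos : 0 < d := by simp only [hd]; linarith
  have ht : fwTime T j = 1 / d - 1 := rfl
  have h1t : 1 + fwTime T j = 1 / d := by rw [ht]; ring
  constructor
  · rw [h1t]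
    field_simp
  · rw [h1t, ht]
    have hdne : d ≠ 0 := ne_of_gt hdpos
    have he : (1/d - 1)/(1/d) = 1 - d := by field_simp
    rw [he, hd]; ring

lemma fwSqa_eq {T j : ℕ} (hT : 1 ≤ T) (hj : j ≤ T) :
    fwSqa T j = 1 + harmonicNum j / harmonicNum T := by
  obtain ⟨hr0, hr1⟩ := fw_frac_mem hT hj
  rw [fwSqa, (fwTime_inv hT hj).2, Real.exp_log (by linarith)]

lemma fwRatio_eq {T j : ℕ} (hT : 1 ≤ T) (hj : j + 1 ≤ T) :
    fwRatio T j = fwSqa T j / fwSqa T (j + 1) := by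
  obtain ⟨hr0, hr1⟩ := fw_frac_mem hT (le_trans (Nat.le_succ j) hj)
  obtain ⟨hr0', hr1'⟩ := fw_frac_mem hT hj
  rw [fwRatio, (fwTime_inv hT (le_trans (Nat.le_succ j) hj)).1, (fwTime_inv hT hj).1,
    fwSqa_eq hT (le_trans (Nat.le_succ j) hj), fwSqa_eq hT hj]
  rw [show -(1 - Real.log (1 + harmonicNum j / harmonicNum T)) +
      (1 - Real.log (1 + harmonicNum (j+1) / harmonicNum T)) =
      Real.log (1 + harmonicNum j / harmonicNum T) -
      Real.log (1 + harmonicNum (j+1) / harmonicNum T) from by ring]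
  rw [Real.exp_sub, Real.exp_log (by linarith), Real.exp_log (by linarith)]

lemma fwSqa_one_le {T j : ℕ} (hT : 1 ≤ T) (hj : j ≤ T) : 1 ≤ fwSqa T j := by
  obtain ⟨hr0, hr1⟩ := fw_frac_mem hT hj
  rw [fwSqa_eq hT hj]
  linarith

lemma fwSqa_mono {T j : ℕ} (hT : 1 ≤ T) (hj : j + 1 ≤ T) :
    fwSqa T j ≤ fwSqa T (j + 1) := by
  rw [fwSqa_eq hT (le_trans (Nat.le_succ j) hj), fwSqa_eq hT hj]
  have := harmonicNum_mono (Nat.le_succ j)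
  have hTpos := harmonicNum_pos hT
  have h2 : harmonicNum j / harmonicNum T ≤ harmonicNum (j+1) / harmonicNum T := by
    gcongr
  linarith

end Arith

section MainProof

variable {n : ℕ} {F : (Fin n → ℝ) → ℝ} {gradF : (Fin n → ℝ) → Fin n → ℝ}

lemma fw_x_bounds
    (P : Set (Fin n → ℝ)) (hPsub : P ⊆ Set.Icc 0 1)
    (T : ℕ) (hT : 1 ≤ T) (x v : ℕ → Fin n → ℝ) (hx0 : x 0 = 0)
    (hvP : ∀ j < T, v j ∈ P)
    (hstep : ∀ j < T, x (j + 1) = fwRatio T j • x j + (1 - fwRatio T j) • v j) :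
    ∀ j, j ≤ T → (x j ∈ Set.Icc (0 : Fin n → ℝ) 1) ∧ ∀ i, x j i ≤ 1 - 1 / fwSqa T j := by
  intro j
  induction j with
  | zero =>
    intro _
    have h0 : fwSqa T 0 = 1 := by
      rw [fwSqa_eq hT (Nat.zero_le T)]
      simp [harmonicNum]
    rw [hx0, h0]
    refine ⟨⟨le_refl _, fun i => by norm_num⟩, fun i => by norm_num⟩
  | succ j ih =>
    intro hj1
    have hjlt : j < T := hj1
    obtain ⟨hbox, hbnd⟩ := ih (Nat.le_of_lt hjlt)
    have hvbox := hPsub (hvP j hjlt)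
    have hs1 : 1 ≤ fwSqa T j := fwSqa_one_le hT (Nat.le_of_lt hjlt)
    have hs2 : fwSqa T j ≤ fwSqa T (j+1) := fwSqa_mono hT hj1
    have hs1' : (0:ℝ) < fwSqa T j := by linarith
    have hs2' : (0:ℝ) < fwSqa T (j+1) := by linarith
    have hρ : fwRatio T j = fwSqa T j / fwSqa T (j+1) := fwRatio_eq hT hj1
    have hρ0 : 0 ≤ fwRatio T j := by rw [hρ]; positivity
    have hρ1 : fwRatio T j ≤ 1 := by rw [hρ, div_le_one hs2']; exact hs2
    rw [hstep j hjlt]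
    have hxi0 : ∀ i, (0:ℝ) ≤ x j i := fun i => hbox.1 i
    have hxi1 : ∀ i, x j i ≤ 1 := fun i => hbox.2 i
    have hvi0 : ∀ i, (0:ℝ) ≤ v j i := fun i => hvbox.1 i
    have hvi1 : ∀ i, v j i ≤ 1 := fun i => hvbox.2 i
    refine ⟨⟨fun i => ?_, fun i => ?_⟩, fun i => ?_⟩
    · simp only [Pi.add_apply, Pi.smul_apply, smul_eq_mul, Pi.zero_apply]
      nlinarith [mul_nonneg hρ0 (hxi0 i), mul_nonneg (by linarith : (0:ℝ) ≤ 1 - fwRatio T j) (hvi0 i)]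
    · simp only [Pi.add_apply, Pi.smul_apply, smul_eq_mul, Pi.one_apply]
      nlinarith [mul_le_mul_of_nonneg_left (hxi1 i) hρ0,
        mul_le_mul_of_nonneg_left (hvi1 i) (by linarith : (0:ℝ) ≤ 1 - fwRatio T j)]
    · simp only [Pi.add_apply, Pi.smul_apply, smul_eq_mul]
      have hinv : fwRatio T j * (1 / fwSqa T j) = 1 / fwSqa T (j+1) := by
        rw [hρ]; field_simp
      linarith [mul_le_mul_of_nonneg_left (hbnd i) hρ0,
        mul_le_mul_of_nonneg_left (hvi1 i) (by linarith : (0:ℝ) ≤ 1 - fwRatio T j), hinv]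


end MainProof

set_option maxHeartbeats 1600000 in
/-- With the Lyapunov function `E(t_j) = a_{t_j} F(x(t_j)) - √a_{t_j} F(x*)`,
for every `j < T`,
`E(t_{j+1}) - E(t_j) ≥ √a_{t_j} (√(a_{t_{j+1}}/a_{t_j}) - 1)² (F(x*) - √a_{t_j} F(x(t_j)))
  - (nL/2)(√a_{t_{j+1}} - √a_{t_j})²`. -/
theorem fw_lyapunov_increment_bound
    (n : ℕ) (F : (Fin n → ℝ) → ℝ) (gradF : (Fin n → ℝ) → Fin n → ℝ)
    (L : ℝ) (hL : 0 ≤ L)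
    (hFnonneg : ∀ z ∈ Set.Icc (0 : Fin n → ℝ) 1, 0 ≤ F z)
    (hDR : DRSubmodular F)
    (hgrad : HasGradientOnBox F gradF)
    (hsmooth : ∀ z ∈ Set.Icc (0 : Fin n → ℝ) 1, ∀ w ∈ Set.Icc (0 : Fin n → ℝ) 1,
      |F w - F z - ∑ i, gradF z i * (w i - z i)| ≤ L / 2 * ∑ i, (w i - z i) ^ 2)
    (P : Set (Fin n → ℝ)) (hPsub : P ⊆ Set.Icc 0 1) (hPconv : Convex ℝ P)
    (h0P : (0 : Fin n → ℝ) ∈ P)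
    (xstar : Fin n → ℝ) (hxstarP : xstar ∈ P) (hxstarMax : ∀ z ∈ P, F z ≤ F xstar)
    (T : ℕ) (hT : 1 ≤ T)
    (x v : ℕ → Fin n → ℝ)
    (hx0 : x 0 = 0)
    (hvP : ∀ j < T, v j ∈ P)
    (hvmax : ∀ j < T, ∀ w ∈ P, ∑ i, gradF (x j) i * w i ≤ ∑ i, gradF (x j) i * v j i)
    (hstep : ∀ j < T, x (j + 1) = fwRatio T j • x j + (1 - fwRatio T j) • v j)
    (E : ℕ → ℝ)
    (hE : ∀ j, E j = fwSqa T j ^ 2 * F (x j) - fwSqa T j * F xstar) :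
    ∀ j < T,
      E (j + 1) - E j ≥
        fwSqa T j * (fwSqa T (j + 1) / fwSqa T j - 1) ^ 2 *
            (F xstar - fwSqa T j * F (x j)) -
          (n : ℝ) * L / 2 * (fwSqa T (j + 1) - fwSqa T j) ^ 2 := by
  intro j hj
  have hjT : j ≤ T := hj.le
  have hj1 : j + 1 ≤ T := hj
  set s := fwSqa T j with hsdef
  set s' := fwSqa T (j+1) with hs'def
  have hs1 : 1 ≤ s := fwSqa_one_le hT hjT
  have hs2 : s ≤ s' := fwSqa_mono hT hj1
  have hspos : (0:ℝ) < s := by linarith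
  have hs'pos : (0:ℝ) < s' := by linarith
  obtain ⟨hxbox, hxbnd⟩ := fw_x_bounds P hPsub T hT x v hx0 hvP hstep j hjT
  obtain ⟨hx'box, _⟩ := fw_x_bounds P hPsub T hT x v hx0 hvP hstep (j+1) hj1
  have hvbox := hPsub (hvP j hj)
  have hxsbox := hPsub hxstarP
  have hρ : fwRatio T j = s / s' := fwRatio_eq hT hj1
  set γ := 1 - s/s' with hγdef
  have hγ0 : 0 ≤ γ := by
    have : s/s' ≤ 1 := by rw [div_le_one hs'pos]; exact hs2
    rw [hγdef]; linarith
  -- difference of iterates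
  have hxdiff : ∀ i, x (j+1) i - x j i = γ * (v j i - x j i) := by
    intro i
    rw [hstep j hj, hρ]
    simp only [Pi.add_apply, Pi.smul_apply, smul_eq_mul, hγdef]
    ring
  set D := ∑ i, gradF (x j) i * (v j i - x j i) with hDdef
  set F0 := F (x j) with hF0def
  set F1 := F (x (j+1)) with hF1def
  set Fs := F xstar with hFsdef
  -- smoothness bound
  have hsm := hsmooth (x j) hxbox (x (j+1)) hx'box
  have hlin : ∑ i, gradF (x j) i * (x (j+1) i - x j i) = γ * D := by
    rw [hDdef, Finset.mul_sum]
    refine Finset.sum_congr rfl fun i _ => ?_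
    rw [hxdiff i]; ring
  have hsq : ∑ i, (x (j+1) i - x j i)^2 ≤ (n:ℝ) * γ^2 := by
    have hterm : ∀ i : Fin n, (x (j+1) i - x j i)^2 ≤ γ^2 := by
      intro i
      rw [hxdiff i, mul_pow]
      have h1 : (0:ℝ) ≤ x j i := hxbox.1 i
      have h2 : x j i ≤ 1 := hxbox.2 i
      have h3 : (0:ℝ) ≤ v j i := hvbox.1 i
      have h4 : v j i ≤ 1 := hvbox.2 i
      have h5 : (v j i - x j i)^2 ≤ 1 := by nlinarith
      calc γ^2 * (v j i - x j i)^2 ≤ γ^2 * 1 :=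
            mul_le_mul_of_nonneg_left h5 (sq_nonneg γ)
        _ = γ^2 := mul_one _
    calc ∑ i, (x (j+1) i - x j i)^2 ≤ ∑ _i : Fin n, γ^2 :=
          Finset.sum_le_sum fun i _ => hterm i
      _ = (n:ℝ) * γ^2 := by
          rw [Finset.sum_const, Finset.card_univ, Fintype.card_fin, nsmul_eq_mul]
  have key1 : γ * D - L/2 * ((n:ℝ) * γ^2) ≤ F1 - F0 := by
    have habs := (abs_le.1 hsm).1
    rw [hlin] at habs
    have : L/2 * ∑ i, (x (j+1) i - x j i)^2 ≤ L/2 * ((n:ℝ)*γ^2) := by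
      apply mul_le_mul_of_nonneg_left hsq (by linarith)
    linarith
  -- multiply by s'^2
  have hm := mul_le_mul_of_nonneg_left key1 (le_of_lt (by positivity : (0:ℝ) < s'^2))
  have id1 : s'^2 * γ = s' * (s' - s) := by
    rw [hγdef]; field_simp; try ring
  have id2 : s'^2 * γ^2 = (s' - s)^2 := by
    rw [hγdef]; field_simp; try ring
  have hswap : s'^2 * (γ * D - L/2 * ((n:ℝ) * γ^2)) =
      s' * (s' - s) * D - (n:ℝ) * L/2 * (s' - s)^2 := by
    linear_combination D * id1 - (n:ℝ) * L/2 * id2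
  have h1' : s'^2 * F0 + s' * (s' - s) * D - (n:ℝ)*L/2*(s'-s)^2 ≤ s'^2 * F1 := by
    nlinarith [hm, hswap]
  -- gradient direction bounds
  have hB := hvmax j hj xstar hxstarP
  have hDsplit : ∑ i, gradF (x j) i * (xstar i - x j i) =
      D - (∑ i, gradF (x j) i * v j i - ∑ i, gradF (x j) i * xstar i) := by
    rw [hDdef, ← Finset.sum_sub_distrib, ← Finset.sum_sub_distrib]
    refine Finset.sum_congr rfl fun i _ => ?_
    ring
  have hC := hassani hDR hgrad hxbox hxsbox (gradF := gradF)
  have hδ0 : (0:ℝ) ≤ 1 - 1/s := by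
    have : 1/s ≤ 1 := by rw [div_le_one hspos]; exact hs1
    linarith
  have hδ1 : 1 - 1/s < 1 := by
    have : 0 < 1/s := by positivity
    linarith
  have hsup := sup_lower_bound hDR hgrad hFnonneg hxbox hxsbox hδ0 hδ1 hxbnd
  have hsup' : (1/s) * Fs ≤ F (x j ⊔ xstar) := by
    have he : (1:ℝ) - (1 - 1/s) = 1/s := by ring
    rw [he] at hsup
    exact hsup
  have hinf0 : 0 ≤ F (x j ⊓ xstar) := by
    refine hFnonneg _ ⟨fun i => le_inf (hxbox.1 i) (hxsbox.1 i),
      fun i => le_trans (inf_le_left (b := xstar i)) (hxbox.2 i)⟩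
  have hDstar : (1/s) * Fs - 2 * F0 ≤ D := by
    have := hC
    rw [hDsplit] at this
    linarith
  -- combine everything
  have hmul : s' * (s' - s) * ((1/s) * Fs - 2 * F0) ≤ s' * (s' - s) * D :=
    mul_le_mul_of_nonneg_left hDstar (by nlinarith)
  rw [hE (j+1), hE j]
  have hinv : s * (1/s) = 1 := by field_simp
  have idR : s * (s'/s - 1)^2 * (Fs - s * F0) =
      (s'-s)^2 * ((1/s) * Fs) - (s'-s)^2 * F0 := by
    field_simp
  have hkey : s'^2*F0 + s' * (s' - s) * ((1/s) * Fs - 2 * F0) - (n:ℝ)*L/2*(s'-s)^2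
        - s'*Fs + s*Fs - s^2*F0 =
      (s'-s)^2*((1/s)*Fs) - (s'-s)^2*F0 - (n:ℝ)*L/2*(s'-s)^2 := by
    linear_combination (s' - s) * Fs * hinv
  rw [ge_iff_le, idR]
  linarith [h1', hmul, hkey]
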